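/- Let j : [0,∞) → [0,∞) be convex and C¹ with j(0)=0, j'(0) ≥ 0, and j' concave on [0,∞). For R ≥ 1 let j_R(v):=min(j(v),j(R)). Then for all v₁, v₂ > 0, (v₁+v₂)·(j_R(v₁+v₂) − j_R(v₁) − j_R(v₂)) ≤ 2·(v₂·j_R(v₁) + v₁·j_R(v₂)). -/

import Mathlib

open Set

/-- superadditivity estimate for the truncation `j_R = min(j, j(R))` of a
convex `C¹` function `j` with concave derivative, `j(0)=0` and `j'(0) ≥ 0`:
`(v₁+v₂)(j_R(v₁+v₂) − j_R(v₁) − j_R(v₂)) ≤ 2 (v₂ j_R(v₁) + v₁ j_R(v₂))`. -/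
theorem truncation_superadditivity (j : ℝ → ℝ)
    (hjconv : ConvexOn ℝ (Ici 0) j)
    (hjC1 : ContDiffOn ℝ 1 j (Ici 0))
    (hj'conc : ConcaveOn ℝ (Ici 0) (derivWithin j (Ici 0)))
    (hjnonneg : ∀ v, 0 ≤ v → 0 ≤ j v)
    (hj0 : j 0 = 0) (hj'0 : 0 ≤ derivWithin j (Ici 0) 0)
    (R : ℝ) (hR : 1 ≤ R)
    (v₁ v₂ : ℝ) (h1 : 0 < v₁) (h2 : 0 < v₂) :
    (v₁ + v₂) * (min (j (v₁ + v₂)) (j R) - min (j v₁) (j R) - min (j v₂) (j R)) ≤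
      2 * (v₂ * min (j v₁) (j R) + v₁ * min (j v₂) (j R)) := by
  set f' := derivWithin j (Ici 0) with hf'def
  have hR0 : (0:ℝ) < R := lt_of_lt_of_le one_pos hR
  have hdiff : DifferentiableOn ℝ j (Ici 0) := hjC1.differentiableOn one_ne_zero
  -- HasDerivAt at interior points
  have hder : ∀ x : ℝ, 0 < x → HasDerivAt j (f' x) x := by
    intro x hx
    have hmem : Ici (0:ℝ) ∈ nhds x := Ici_mem_nhds hx
    have := (hdiff x (le_of_lt hx)).hasDerivWithinAt
    rw [hf'def, derivWithin_of_mem_nhds hmem]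
    exact ((hdiff.differentiableAt hmem).hasDerivAt)
  have hderivWithin_eq : ∀ x : ℝ, 0 < x → f' x = deriv j x := by
    intro x hx
    exact derivWithin_of_mem_nhds (Ici_mem_nhds hx)
  -- f' nonneg on Ici 0
  have hf'nonneg : ∀ x : ℝ, 0 ≤ x → 0 ≤ f' x := by
    intro x hx
    rcases eq_or_lt_of_le hx with rfl | hx'
    · exact hj'0
    · have hs := hjconv.slope_le_derivWithin (self_mem_Ici) (mem_Ici.2 hx)
        hx' (hdiff x hx)
      have : slope j 0 x = j x / x := by
        simp [slope_def_field, hj0, div_eq_mul_inv]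
      rw [this] at hs
      exact le_trans (div_nonneg (hjnonneg x hx) (le_of_lt hx')) hs
  -- j monotone on Ici 0
  have hjmono : MonotoneOn j (Ici 0) := by
    apply monotoneOn_of_deriv_nonneg (convex_Ici 0) hjC1.continuousOn
    · intro x hx
      rw [interior_Ici] at hx
      exact ((hdiff.differentiableAt (Ici_mem_nhds hx)).differentiableWithinAt)
    · intro x hx
      rw [interior_Ici] at hx
      rw [← hderivWithin_eq x hx]
      exact hf'nonneg x (le_of_lt hx)
  -- subadditivity of f'
  have hsub : ∀ a b : ℝ, 0 < a → 0 < b → f' (a + b) ≤ f' a + f' b := by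
    intro a b ha hb
    have hab : 0 < a + b := by linarith
    have h₁ : (a / (a+b)) • f' (a+b) + (b/(a+b)) • f' 0 ≤ f' ((a/(a+b)) • (a+b) + (b/(a+b)) • (0:ℝ)) :=
      hj'conc.2 (mem_Ici.2 hab.le) self_mem_Ici (by positivity) (by positivity)
        (by field_simp)
    have h₂ : (b / (a+b)) • f' (a+b) + (a/(a+b)) • f' 0 ≤ f' ((b/(a+b)) • (a+b) + (a/(a+b)) • (0:ℝ)) :=
      hj'conc.2 (mem_Ici.2 hab.le) self_mem_Ici (by positivity) (by positivity)
        (by field_simp; ring)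
    have e₁ : (a/(a+b)) • (a+b) + (b/(a+b)) • (0:ℝ) = a := by rw [smul_eq_mul, smul_eq_mul, mul_zero, add_zero]; field_simp
    have e₂ : (b/(a+b)) • (a+b) + (a/(a+b)) • (0:ℝ) = b := by rw [smul_eq_mul, smul_eq_mul, mul_zero, add_zero]; field_simp
    rw [e₁] at h₁; rw [e₂] at h₂
    have hfa : (a/(a+b)) * f' (a+b) ≤ f' a := by
      have : 0 ≤ (b/(a+b)) * f' 0 := mul_nonneg (by positivity) hj'0
      simp only [smul_eq_mul] at h₁; linarith
    have hfb : (b/(a+b)) * f' (a+b) ≤ f' b := by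
      have : 0 ≤ (a/(a+b)) * f' 0 := mul_nonneg (by positivity) hj'0
      simp only [smul_eq_mul] at h₂; linarith
    have : (a/(a+b)) * f' (a+b) + (b/(a+b)) * f' (a+b) = f' (a+b) := by
      field_simp
    linarith
  -- key: v * f' v ≤ 2 * j v
  have hkey : ∀ v : ℝ, 0 < v → v * f' v ≤ 2 * j v := by
    intro v hv
    have hcontf' : ContinuousOn f' (Ici 0) :=
      hjC1.continuousOn_derivWithin (uniqueDiffOn_Ici 0) le_rfl
    have hint : IntervalIntegrable f' MeasureTheory.volume 0 v := by
      apply ContinuousOn.intervalIntegrable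
      apply hcontf'.mono
      rw [uIcc_of_le hv.le]
      exact Icc_subset_Ici_self
    have hint2 : IntervalIntegrable (fun s => s * (f' v / v)) MeasureTheory.volume 0 v :=
      (continuous_id.mul continuous_const).intervalIntegrable 0 v
    have hFTC : (∫ s in (0:ℝ)..v, f' s) = j v := by
      rw [intervalIntegral.integral_eq_sub_of_hasDerivAt_of_le hv.le
        (hjC1.continuousOn.mono (Icc_subset_Ici_self)) (fun x hx => hder x hx.1) hint, hj0, sub_zero]
    have hlb : ∀ s ∈ Icc (0:ℝ) v, s * (f' v / v) ≤ f' s := by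
      intro s hs
      have h₁ : (s/v) • f' v + (1 - s/v) • f' 0 ≤ f' ((s/v) • v + (1 - s/v) • (0:ℝ)) :=
        hj'conc.2 (mem_Ici.2 hv.le) self_mem_Ici (div_nonneg hs.1 hv.le)
          (by nlinarith [hs.1, hs.2, div_le_one_of_le₀ hs.2 hv.le]) (by ring)
      have e : (s/v) • v + (1 - s/v) • (0:ℝ) = s := by rw [smul_eq_mul, smul_eq_mul, mul_zero, add_zero]; field_simp
      rw [e] at h₁
      have h0 : 0 ≤ (1 - s/v) * f' 0 :=
        mul_nonneg (by nlinarith [div_le_one_of_le₀ hs.2 hv.le]) hj'0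
      simp only [smul_eq_mul] at h₁
      have : s * (f' v / v) = (s/v) * f' v := by ring
      linarith [this ▸ h₁]
    have hcomp : (∫ s in (0:ℝ)..v, s * (f' v / v)) ≤ ∫ s in (0:ℝ)..v, f' s :=
      intervalIntegral.integral_mono_on hv.le hint2 hint hlb
    have hval : (∫ s in (0:ℝ)..v, s * (f' v / v)) = v * f' v / 2 := by
      rw [intervalIntegral.integral_mul_const, integral_id]
      field_simp; ring
    rw [hval, hFTC] at hcomp
    linarith
  -- core estimate
  have hcore : ∀ v w : ℝ, 0 < v → 0 < w → j (v + w) - j v - j w ≤ v * f' w := by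
    intro v w hv hw
    set g : ℝ → ℝ := fun x => j (x + w) - j x - x * f' w with hg
    have hgcont : ContinuousOn g (Ici 0) := by
      apply ContinuousOn.sub
      apply ContinuousOn.sub
      · exact hjC1.continuousOn.comp (continuous_id.add continuous_const).continuousOn
          (fun x hx => by simp at hx ⊢; linarith)
      · exact hjC1.continuousOn
      · exact (continuous_id.mul continuous_const).continuousOn
    have hgder : ∀ x : ℝ, 0 < x → HasDerivAt g (f' (x + w) - f' x - f' w) x := by
      intro x hx
      have h₁ : HasDerivAt (fun y => j (y + w)) (f' (x + w)) x := by
        have := (hder (x + w) (by linarith)).comp x ((hasDerivAt_id x).add_const w)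
        rw [mul_one] at this
        exact this
      exact (h₁.sub (hder x hx)).sub (by simpa using (hasDerivAt_id x).mul_const (f' w))
    have hganti : AntitoneOn g (Ici 0) := by
      apply antitoneOn_of_deriv_nonpos (convex_Ici 0) hgcont
      · intro x hx
        rw [interior_Ici] at hx
        exact (hgder x hx).differentiableAt.differentiableWithinAt
      · intro x hx
        rw [interior_Ici] at hx
        rw [(hgder x hx).deriv]
        have := hsub x w hx hw
        linarith
    have := hganti self_mem_Ici (mem_Ici.2 hv.le) hv.le
    simp only [hg, hj0, zero_add, zero_mul, sub_zero] at this
    linarith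
  -- combine: untruncated inequality
  have hmain : ∀ v w : ℝ, 0 < v → 0 < w →
      (v + w) * (j (v + w) - j v - j w) ≤ 2 * (w * j v + v * j w) := by
    intro v w hv hw
    have hA := hcore v w hv hw
    have hB := hcore w v hw hv
    rw [add_comm w v] at hB
    have hkv := hkey v hv
    have hkw := hkey w hw
    nlinarith [mul_le_mul_of_nonneg_left hA hw.le, mul_le_mul_of_nonneg_left hB hv.le,
      mul_le_mul_of_nonneg_left hkv hw.le, mul_le_mul_of_nonneg_left hkw hv.le]
  -- truncation case analysis
  have hjRnn : 0 ≤ j R := hjnonneg R hR0.le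
  have hm1nn : 0 ≤ min (j v₁) (j R) := le_min (hjnonneg v₁ h1.le) hjRnn
  have hm2nn : 0 ≤ min (j v₂) (j R) := le_min (hjnonneg v₂ h2.le) hjRnn
  rcases le_or_gt R v₁ with hv1 | hv1
  · have e1 : min (j v₁) (j R) = j R :=
      min_eq_right (hjmono (mem_Ici.2 hR0.le) (mem_Ici.2 (by linarith)) hv1)
    have hle : min (j (v₁ + v₂)) (j R) ≤ j R := min_le_right _ _
    nlinarith [min_le_right (j (v₁+v₂)) (j R)]
  rcases le_or_gt R v₂ with hv2 | hv2
  · have e2 : min (j v₂) (j R) = j R :=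
      min_eq_right (hjmono (mem_Ici.2 hR0.le) (mem_Ici.2 (by linarith)) hv2)
    nlinarith [min_le_right (j (v₁+v₂)) (j R)]
  · have e1 : min (j v₁) (j R) = j v₁ :=
      min_eq_left (hjmono (mem_Ici.2 h1.le) (mem_Ici.2 hR0.le) hv1.le)
    have e2 : min (j v₂) (j R) = j v₂ :=
      min_eq_left (hjmono (mem_Ici.2 h2.le) (mem_Ici.2 hR0.le) hv2.le)
    have hle : min (j (v₁ + v₂)) (j R) ≤ j (v₁ + v₂) := min_le_left _ _
    have := hmain v₁ v₂ h1 h2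
    rw [e1, e2]
    nlinarith
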